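/- Let C be the linear code over GF(2) of length N = 2^n whose codewords are all vectors u·G_2^{⊗n} where u ranges over vectors supported on a nonempty set I ⊆ {0,...,N-1} (i.e., u_i = 0 for i ∉ I). Then the minimum distance of C equals min_{i ∈ I} 2^{wt(i)}. -/

import Mathlib

def G2 : Matrix (Fin 2) (Fin 2) (ZMod 2) := !![1, 0; 1, 1]

def pow2Equiv (n : ℕ) : Fin 2 × Fin (2^n) ≃ Fin (2^(n+1)) :=
  finProdFinEquiv.trans (finCongr (by rw [pow_succ, Nat.mul_comm]))

/-- The n-th Kronecker power of G₂ = [[1,0],[1,1]] over GF(2). -/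
def G2pow : (n : ℕ) → Matrix (Fin (2^n)) (Fin (2^n)) (ZMod 2)
  | 0 => 1
  | n+1 => Matrix.reindex (pow2Equiv n) (pow2Equiv n) (Matrix.kroneckerMap (· * ·) G2 (G2pow n))

/-- Number of ones in the binary expansion. -/
def wt (i : ℕ) : ℕ := (Nat.digits 2 i).count 1

/-- Hamming weight of a binary vector. -/
def hw {N : ℕ} (v : Fin N → ZMod 2) : ℕ := (Finset.univ.filter (fun j => v j ≠ 0)).card

/- ### auxiliary lemmas -/

lemma pow2Equiv_val (n : ℕ) (b : Fin 2) (i : Fin (2^n)) :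
    ((pow2Equiv n (b, i) : Fin (2^(n+1))) : ℕ) = (i : ℕ) + 2^n * (b : ℕ) := by
  simp [pow2Equiv, finProdFinEquiv]

lemma wt_two_mul (k : ℕ) : wt (2 * k) = wt k := by
  rcases Nat.eq_zero_or_pos k with rfl | hk
  · simp
  · unfold wt
    rw [Nat.digits_def' (by norm_num : 1 < 2) (by omega)]
    simp [Nat.mul_div_cancel_left _ (by norm_num : 0 < 2), Nat.mul_mod_right]

lemma wt_two_mul_add_one (k : ℕ) : wt (2 * k + 1) = wt k + 1 := by
  unfold wt
  rw [Nat.digits_def' (by norm_num : 1 < 2) (by omega)]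
  have h1 : (2 * k + 1) % 2 = 1 := by omega
  have h2 : (2 * k + 1) / 2 = k := by omega
  simp [h1, h2]

lemma wt_add_pow (n i : ℕ) (h : i < 2^n) : wt (i + 2^n) = wt i + 1 := by
  induction n generalizing i with
  | zero =>
    interval_cases i
    simp [wt]
  | succ n ih =>
    have hq : i / 2 < 2^n := by
      have : (2:ℕ)^(n+1) = 2 * 2^n := by ring
      omega
    rcases Nat.even_or_odd i with ⟨q, hq'⟩ | ⟨q, hq'⟩
    · have : i + 2^(n+1) = 2 * (q + 2^n) := by subst hq'; ring
      rw [this, wt_two_mul, ih q (by subst hq'; omega), hq', ← two_mul, wt_two_mul]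
    · have : i + 2^(n+1) = 2 * (q + 2^n) + 1 := by subst hq'; ring
      rw [this, wt_two_mul_add_one, ih q (by omega), hq', wt_two_mul_add_one]

lemma wt_pow2Equiv_zero (n : ℕ) (i : Fin (2^n)) :
    wt ((pow2Equiv n (0, i) : Fin (2^(n+1))) : ℕ) = wt (i : ℕ) := by
  rw [pow2Equiv_val]; simp

lemma wt_pow2Equiv_one (n : ℕ) (i : Fin (2^n)) :
    wt ((pow2Equiv n (1, i) : Fin (2^(n+1))) : ℕ) = wt (i : ℕ) + 1 := by
  rw [pow2Equiv_val]
  simp only [Fin.val_one, mul_one]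
  exact wt_add_pow n i i.isLt

lemma G2pow_succ_apply (n : ℕ) (b c : Fin 2) (i j : Fin (2^n)) :
    G2pow (n+1) (pow2Equiv n (b, i)) (pow2Equiv n (c, j)) = G2 b c * G2pow n i j := by
  show (Matrix.reindex (pow2Equiv n) (pow2Equiv n)
      (Matrix.kroneckerMap (· * ·) G2 (G2pow n))) _ _ = _
  simp [Matrix.reindex_apply]

lemma hw_split (n : ℕ) (v : Fin (2^(n+1)) → ZMod 2) :
    hw v = hw (fun j => v (pow2Equiv n (0, j))) + hw (fun j => v (pow2Equiv n (1, j))) := by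
  unfold hw
  rw [Finset.card_filter, Finset.card_filter, Finset.card_filter,
    ← Equiv.sum_comp (pow2Equiv n) (fun k => if v k ≠ 0 then 1 else 0),
    Fintype.sum_prod_type, Fin.sum_univ_two]

lemma hw_zero (N : ℕ) : hw (0 : Fin N → ZMod 2) = 0 := by
  simp [hw]

lemma vecMul_succ_zero (n : ℕ) (u : Fin (2^(n+1)) → ZMod 2) (j : Fin (2^n)) :
    Matrix.vecMul u (G2pow (n+1)) (pow2Equiv n (0, j)) =
      Matrix.vecMul (fun i => u (pow2Equiv n (0, i)) + u (pow2Equiv n (1, i))) (G2pow n) j := by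
  unfold Matrix.vecMul dotProduct
  rw [← Equiv.sum_comp (pow2Equiv n) (fun k => u k * G2pow (n+1) k (pow2Equiv n (0, j))),
    Fintype.sum_prod_type, Fin.sum_univ_two, ← Finset.sum_add_distrib]
  refine Finset.sum_congr rfl fun i _ => ?_
  rw [G2pow_succ_apply, G2pow_succ_apply]
  have h0 : G2 0 0 = 1 := by decide
  have h1 : G2 1 0 = 1 := by decide
  rw [h0, h1]; ring

lemma vecMul_succ_one (n : ℕ) (u : Fin (2^(n+1)) → ZMod 2) (j : Fin (2^n)) :
    Matrix.vecMul u (G2pow (n+1)) (pow2Equiv n (1, j)) =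
      Matrix.vecMul (fun i => u (pow2Equiv n (1, i))) (G2pow n) j := by
  unfold Matrix.vecMul dotProduct
  rw [← Equiv.sum_comp (pow2Equiv n) (fun k => u k * G2pow (n+1) k (pow2Equiv n (1, j))),
    Fintype.sum_prod_type, Fin.sum_univ_two]
  have e0 : ∀ i : Fin (2^n), u (pow2Equiv n (0, i)) * G2pow (n+1) (pow2Equiv n (0, i)) (pow2Equiv n (1, j)) = 0 := by
    intro i
    rw [G2pow_succ_apply]
    have : G2 0 1 = 0 := by decide
    rw [this]; ring
  simp only [e0, Finset.sum_const_zero, zero_add]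
  refine Finset.sum_congr rfl fun i _ => ?_
  rw [G2pow_succ_apply]
  have : G2 1 1 = 1 := by decide
  rw [this, one_mul]

/-- Row `i` of `G2pow n` has Hamming weight `2 ^ wt i`. -/
lemma hw_row (n : ℕ) (i : Fin (2^n)) :
    hw (fun j => G2pow n i j) = 2 ^ wt (i : ℕ) := by
  induction n with
  | zero =>
    have : (i : ℕ) = 0 := by omega
    rw [this]
    simp only [wt, Nat.digits_zero, List.count_nil, pow_zero]
    have : ∀ j : Fin (2^0), G2pow 0 i j = 1 := by
      intro j
      have hi : i = 0 := by omega
      have hj : j = 0 := by omega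
      subst hi hj; rfl
    simp [hw, this]
  | succ n ih =>
    obtain ⟨⟨b, i'⟩, rfl⟩ := (pow2Equiv n).surjective i
    rw [hw_split]
    have hb : b = 0 ∨ b = 1 := by omega
    rcases hb with rfl | rfl
    · have hlow : (fun j => G2pow (n+1) (pow2Equiv n (0, i')) (pow2Equiv n (0, j)))
          = fun j => G2pow n i' j := by
        funext j; rw [G2pow_succ_apply]
        have : G2 0 0 = 1 := by decide
        rw [this, one_mul]
      have hhigh : (fun j => G2pow (n+1) (pow2Equiv n (0, i')) (pow2Equiv n (1, j)))
          = (0 : Fin (2^n) → ZMod 2) := by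
        funext j; rw [G2pow_succ_apply]
        have : G2 0 1 = 0 := by decide
        rw [this, zero_mul]; rfl
      rw [hlow, hhigh, hw_zero, ih, wt_pow2Equiv_zero, add_zero]
    · have hlow : (fun j => G2pow (n+1) (pow2Equiv n (1, i')) (pow2Equiv n (0, j)))
          = fun j => G2pow n i' j := by
        funext j; rw [G2pow_succ_apply]
        have : G2 1 0 = 1 := by decide
        rw [this, one_mul]
      have hhigh : (fun j => G2pow (n+1) (pow2Equiv n (1, i')) (pow2Equiv n (1, j)))
          = fun j => G2pow n i' j := by
        funext j; rw [G2pow_succ_apply]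
        have : G2 1 1 = 1 := by decide
        rw [this, one_mul]
      rw [hlow, hhigh, ih, wt_pow2Equiv_one, pow_succ]
      ring

/-- Lower bound: every nonzero message has a support index certifying the weight bound. -/
lemma polar_lb (n : ℕ) (u : Fin (2^n) → ZMod 2) (hu : u ≠ 0) :
    ∃ i, u i ≠ 0 ∧ 2 ^ wt (i : ℕ) ≤ hw (Matrix.vecMul u (G2pow n)) := by
  induction n with
  | zero =>
    refine ⟨0, ?_, ?_⟩
    · intro h
      apply hu
      funext j
      have : j = 0 := by omega
      rw [this]; exact h
    · have hv : Matrix.vecMul u (G2pow 0) = u := Matrix.vecMul_one u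
      rw [hv]
      have h0 : u 0 ≠ 0 := by
        intro h; apply hu; funext j
        have : j = 0 := by omega
        rw [this]; exact h
      have : (0 : Fin (2^0)) ∈ Finset.univ.filter (fun j => u j ≠ 0) := by
        simp [h0]
      calc 2 ^ wt ((0 : Fin (2^0)) : ℕ) = 1 := by norm_num [wt]
        _ ≤ hw u := Finset.card_pos.mpr ⟨0, this⟩
  | succ n ih =>
    set u0 : Fin (2^n) → ZMod 2 := fun i => u (pow2Equiv n (0, i)) with hu0
    set u1 : Fin (2^n) → ZMod 2 := fun i => u (pow2Equiv n (1, i)) with hu1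
    have hsum : hw (Matrix.vecMul u (G2pow (n+1)))
        = hw (Matrix.vecMul (u0 + u1) (G2pow n)) + hw (Matrix.vecMul u1 (G2pow n)) := by
      rw [hw_split]
      have hA : (fun j => Matrix.vecMul u (G2pow (n+1)) (pow2Equiv n (0, j)))
          = Matrix.vecMul (u0 + u1) (G2pow n) := funext fun j => vecMul_succ_zero n u j
      have hB : (fun j => Matrix.vecMul u (G2pow (n+1)) (pow2Equiv n (1, j)))
          = Matrix.vecMul u1 (G2pow n) := funext fun j => vecMul_succ_one n u j
      rw [hA, hB]
    by_cases h1 : u1 = 0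
    · have h0 : u0 ≠ 0 := by
        intro h; apply hu; funext k
        obtain ⟨⟨b, i⟩, rfl⟩ := (pow2Equiv n).surjective k
        fin_cases b
        · exact congrFun h i
        · exact congrFun h1 i
      obtain ⟨i, hi, hle⟩ := ih u0 h0
      refine ⟨pow2Equiv n (0, i), hi, ?_⟩
      rw [wt_pow2Equiv_zero, hsum, h1, add_zero]
      exact le_trans hle (Nat.le_add_right _ _)
    · obtain ⟨i1, hi1, hle1⟩ := ih u1 h1
      by_cases h0 : u0 + u1 = 0
      · have hki : u0 i1 ≠ 0 := by
          have h := congrFun h0 i1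
          simp only [Pi.add_apply, Pi.zero_apply] at h
          intro hz
          rw [hz, zero_add] at h
          exact hi1 h
        refine ⟨pow2Equiv n (0, i1), hki, ?_⟩
        rw [wt_pow2Equiv_zero, hsum]
        exact le_trans hle1 (Nat.le_add_left _ _)
      · obtain ⟨i2, hi2, hle2⟩ := ih (u0 + u1) h0
        by_cases hc : u0 i2 ≠ 0
        · refine ⟨pow2Equiv n (0, i2), hc, ?_⟩
          rw [wt_pow2Equiv_zero, hsum]
          exact le_trans hle2 (Nat.le_add_right _ _)
        · push_neg at hc
          have hu1i2 : u1 i2 ≠ 0 := by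
            have h := hi2
            simp only [Pi.add_apply, hc, zero_add] at h
            exact h
          by_cases hm : 2 ^ wt (i1 : ℕ) ≤ 2 ^ wt (i2 : ℕ)
          · refine ⟨pow2Equiv n (1, i1), hi1, ?_⟩
            rw [wt_pow2Equiv_one, hsum, pow_succ]
            have : 2 ^ wt (i1 : ℕ) ≤ hw (Matrix.vecMul (u0 + u1) (G2pow n)) :=
              le_trans hm hle2
            omega
          · push_neg at hm
            refine ⟨pow2Equiv n (1, i2), hu1i2, ?_⟩
            rw [wt_pow2Equiv_one, hsum, pow_succ]
            have : 2 ^ wt (i2 : ℕ) ≤ hw (Matrix.vecMul u1 (G2pow n)) :=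
              le_trans (le_of_lt hm) hle1
            omega

theorem polar_min_distance (n : ℕ) (I : Finset (Fin (2^n))) (hI : I.Nonempty) :
    IsLeast {w : ℕ | ∃ u : Fin (2^n) → ZMod 2,
        (∀ i, i ∉ I → u i = 0) ∧ Matrix.vecMul u (G2pow n) ≠ 0 ∧
        w = hw (Matrix.vecMul u (G2pow n))}
      (I.inf' hI (fun i => 2 ^ wt (i : ℕ))) := by
  constructor
  · -- membership: the minimum is attained
    obtain ⟨i0, hi0, hmin⟩ := Finset.exists_mem_eq_inf' hI (fun i => 2 ^ wt (i : ℕ))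
    refine ⟨Pi.single i0 1, ?_, ?_, ?_⟩
    · intro i hi
      refine Pi.single_eq_of_ne (fun h => ?_) 1
      subst h
      exact hi hi0
    · rw [Matrix.single_vecMul, show (1 : ZMod 2) • (G2pow n).row i0 = fun j => (1 : ZMod 2) * G2pow n i0 j from rfl]
      intro h
      have hr : hw (fun j => (1 : ZMod 2) * G2pow n i0 j) = 0 := by
        rw [h]; exact hw_zero _
      simp only [one_mul] at hr
      rw [hw_row] at hr
      exact pow_ne_zero _ (two_ne_zero) hr
    · rw [Matrix.single_vecMul, hmin, show (1 : ZMod 2) • (G2pow n).row i0 = fun j => (1 : ZMod 2) * G2pow n i0 j from rfl]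
      have : (fun j => (1 : ZMod 2) * G2pow n i0 j) = fun j => G2pow n i0 j := by
        funext j; rw [one_mul]
      rw [this, hw_row]
  · -- lower bound
    rintro w ⟨u, hsupp, hne, rfl⟩
    have hu : u ≠ 0 := by
      intro h; apply hne; rw [h]; exact Matrix.zero_vecMul _
    obtain ⟨i, hi, hle⟩ := polar_lb n u hu
    have hiI : i ∈ I := by
      by_contra h
      exact hi (hsupp i h)
    exact le_trans (Finset.inf'_le _ hiI) hle
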